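/- For any positive integers n and m and nonnegative integer k, the integer ((km+1)!/(k!)^m) · ∑_{h=0}^{n-1} C(h,k)^m is divisible by n. -/

import Mathlib

open Polynomial Finset

/-- The q-integer `[n]_q = 1 + q + ⋯ + q^{n-1}` as a polynomial in `ℤ[q]`. -/
noncomputable def qint (n : ℕ) : Polynomial ℤ := ∑ i ∈ Finset.range n, X ^ i

/-- The q-factorial `[n]_q! = [n]_q [n-1]_q ⋯ [1]_q`. -/
noncomputable def qfact : ℕ → Polynomial ℤ
  | 0 => 1
  | n + 1 => qint (n + 1) * qfact n

/-- The Gaussian (q-)binomial coefficient `[n choose k]_q` as a polynomial in `ℤ[q]`,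
defined by the q-Pascal recurrence; it equals `∏_{i=1}^k (1-q^{n-i+1})/(1-q^i)` for
`0 ≤ k ≤ n` and `0` otherwise. -/
noncomputable def qbinom : ℕ → ℕ → Polynomial ℤ
  | _, 0 => 1
  | 0, _ + 1 => 0
  | n + 1, k + 1 => qbinom n k + X ^ (k + 1) * qbinom n (k + 1)

namespace Stmt3Aux

/-- subset-of-subset identity, valid for all naturals -/
lemma sos (h a i : ℕ) :
    h.choose (a+i) * (a+i).choose a = h.choose a * (h-a).choose i := by
  rcases le_or_gt (a+i) h with hle | hlt
  · have := Nat.choose_mul (n := h) (Nat.le_add_right a i)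
    simpa using this
  · rw [Nat.choose_eq_zero_of_lt hlt, Nat.zero_mul]
    rcases le_or_gt a h with h1 | h2
    · rw [Nat.choose_eq_zero_of_lt (show h - a < i by omega), Nat.mul_zero]
    · rw [Nat.choose_eq_zero_of_lt h2, Nat.zero_mul]

/-- Vandermonde-type product expansion -/
lemma prod_expand (h a k : ℕ) :
    h.choose a * h.choose k
      = ∑ i ∈ range (k+1), (a+i).choose a * a.choose (k-i) * h.choose (a+i) := by
  rcases lt_or_ge h a with hlt | hle
  · rw [Nat.choose_eq_zero_of_lt hlt, Nat.zero_mul]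
    rw [Finset.sum_congr rfl (fun i _ => ?_), Finset.sum_const_zero]
    rw [Nat.choose_eq_zero_of_lt (show h < a + i by omega), Nat.mul_zero]
  · have hh : h = (h - a) + a := by omega
    calc h.choose a * h.choose k
        = h.choose a * (((h-a) + a).choose k) := by rw [← hh]
      _ = h.choose a * ∑ ij ∈ antidiagonal k, (h-a).choose ij.1 * a.choose ij.2 := by
          rw [Nat.add_choose_eq]
      _ = ∑ i ∈ range (k+1), h.choose a * ((h-a).choose i * a.choose (k-i)) := by
          rw [Finset.Nat.sum_antidiagonal_eq_sum_range_succ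
            (fun x y => (h-a).choose x * a.choose y)]
          rw [Finset.mul_sum]
      _ = _ := by
          refine Finset.sum_congr rfl (fun i _ => ?_)
          calc h.choose a * ((h-a).choose i * a.choose (k-i))
              = (h.choose a * (h-a).choose i) * a.choose (k-i) := by ring
            _ = (h.choose (a+i) * (a+i).choose a) * a.choose (k-i) := by rw [sos h a i]
            _ = _ := by ring

/-- coefficients of `C(h,k)^m` in the binomial basis -/
def cc (k : ℕ) : ℕ → ℕ → ℕ
  | 0, j => if j = 0 then 1 else 0
  | m+1, j => ∑ p ∈ range (k*m+1) ×ˢ range (k+1),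
      if p.1 + p.2 = j then
        cc k m p.1 * ((p.1+p.2).choose p.1 * p.1.choose (k - p.2)) else 0

/-- witness coefficients -/
def uu (k : ℕ) : ℕ → ℕ → ℕ
  | 0, j => if j = 0 then 1 else 0
  | m+1, j => ∑ p ∈ range (k*m+1) ×ˢ range (k+1),
      if p.1 + p.2 = j then
        uu k m p.1 * ((p.1+p.2).choose p.1 * (k*(m+1) - (p.1+p.2)).choose (k - p.2)
          * (p.1+p.2).choose k) else 0

lemma collapse {S : Finset (ℕ×ℕ)} {N : ℕ} (g : ℕ×ℕ → ℕ) (w : ℕ → ℕ)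
    (hmem : ∀ p ∈ S, p.1+p.2 < N) :
    ∑ j ∈ range N, (∑ p ∈ S, if p.1+p.2 = j then g p else 0) * w j
      = ∑ p ∈ S, g p * w (p.1+p.2) := by
  have : ∀ j, (∑ p ∈ S, if p.1+p.2 = j then g p else 0) * w j
      = ∑ p ∈ S, if p.1+p.2 = j then g p * w j else 0 := by
    intro j; rw [Finset.sum_mul]
    exact Finset.sum_congr rfl fun p _ => by split <;> simp
  rw [Finset.sum_congr rfl fun j _ => this j, Finset.sum_comm]
  refine Finset.sum_congr rfl fun p hp => ?_
  rw [Finset.sum_ite_eq (range N) (p.1+p.2) (fun j => g p * w j)]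
  rw [if_pos (Finset.mem_range.2 (hmem p hp))]

lemma mem_bound {k m : ℕ} : ∀ p ∈ range (k*m+1) ×ˢ range (k+1), p.1+p.2 < k*(m+1)+1 := by
  intro p hp
  rw [Finset.mem_product, Finset.mem_range, Finset.mem_range] at hp
  have : k*(m+1) = k*m + k := by ring
  omega

/-- (A): binomial-basis expansion of `C(h,k)^m` -/
lemma lemA (k m h : ℕ) :
    (h.choose k)^m = ∑ j ∈ range (k*m+1), cc k m j * h.choose j := by
  induction m with
  | zero => simp [cc]
  | succ m ih =>
    have lhs : (h.choose k)^(m+1)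
        = ∑ p ∈ range (k*m+1) ×ˢ range (k+1),
            (cc k m p.1 * ((p.1+p.2).choose p.1 * p.1.choose (k - p.2))) * h.choose (p.1+p.2) := by
      rw [pow_succ, ih, Finset.sum_mul, Finset.sum_product]
      refine Finset.sum_congr rfl (fun j _ => ?_)
      rw [mul_assoc, prod_expand h j k, Finset.mul_sum]
      refine Finset.sum_congr rfl (fun i _ => ?_)
      ring
    have hc := collapse (S := range (k*m+1) ×ˢ range (k+1)) (N := k*(m+1)+1)
      (fun p => cc k m p.1 * ((p.1+p.2).choose p.1 * p.1.choose (k - p.2)))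
      (fun j => h.choose j) mem_bound
    rw [lhs, ← hc]
    rfl

/-- the crucial binomial identity -/
lemma key (b a i k : ℕ) (hab : a ≤ b) (hik : i ≤ k) :
    (b+k).factorial * (b.choose a * a.choose (k-i))
      = k.factorial * b.factorial *
        ((b+k).choose (a+i) * ((b+k-(a+i)).choose (k-i) * (a+i).choose k)) := by
  rcases lt_or_ge (a+i) k with hlt | hge
  · rw [Nat.choose_eq_zero_of_lt (show a < k - i by omega),
      Nat.choose_eq_zero_of_lt (show a + i < k from hlt)]
    ring
  · have h1 : a + i ≤ b + k := by omega
    have h2 : k - i ≤ a := by omega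
    have h3 : k - i ≤ b + k - (a+i) := by omega
    have h4 : k ≤ a + i := hge
    have e1 : a - (k-i) = a + i - k := by omega
    have e2 : b + k - (a+i) - (k-i) = b - a := by omega
    qify
    rw [Nat.cast_choose ℚ hab, Nat.cast_choose ℚ h2, Nat.cast_choose ℚ h1,
      Nat.cast_choose ℚ h3, Nat.cast_choose ℚ h4, e1, e2]
    have p : ∀ x : ℕ, (0:ℚ) < x.factorial := fun x => by
      exact_mod_cast Nat.factorial_pos x
    field_simp

lemma step_term (k m a i : ℕ) (ha : a ≤ k*m) (hi : i ≤ k)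
    (IH : (k*m).factorial * cc k m a = (k.factorial)^m * ((k*m).choose a * uu k m a)) :
    (k*m+k).factorial * (cc k m a * ((a+i).choose a * a.choose (k-i)))
      = (k.factorial)^(m+1) * ((k*m+k).choose (a+i) *
          (uu k m a * ((a+i).choose a * (k*m+k - (a+i)).choose (k-i) * (a+i).choose k))) := by
  apply Nat.eq_of_mul_eq_mul_left (Nat.factorial_pos (k*m))
  calc (k*m).factorial * ((k*m+k).factorial * (cc k m a * ((a+i).choose a * a.choose (k-i))))
      = (k*m+k).factorial * ((k*m).factorial * cc k m a) * ((a+i).choose a * a.choose (k-i)) := by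
        ring
    _ = (k*m+k).factorial * ((k.factorial)^m * ((k*m).choose a * uu k m a)) *
          ((a+i).choose a * a.choose (k-i)) := by rw [IH]
    _ = (k.factorial)^m * (uu k m a * (a+i).choose a) *
          ((k*m+k).factorial * ((k*m).choose a * a.choose (k-i))) := by ring
    _ = (k.factorial)^m * (uu k m a * (a+i).choose a) *
          (k.factorial * (k*m).factorial *
            ((k*m+k).choose (a+i) * ((k*m+k-(a+i)).choose (k-i) * (a+i).choose k))) := by
        rw [key (k*m) a i k ha hi]
    _ = _ := by ring

/-- (B): the divisibility witness identity -/
lemma lemB (k : ℕ) : ∀ m j, (k*m).factorial * cc k m j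
    = (k.factorial)^m * ((k*m).choose j * uu k m j)
  | 0, j => by cases j <;> simp [cc, uu]
  | (m+1), j => by
    have hkm : k*(m+1) = k*m + k := by ring
    simp only [cc, uu, hkm]
    rw [Finset.mul_sum, Finset.mul_sum, Finset.mul_sum]
    refine Finset.sum_congr rfl (fun p hp => ?_)
    rw [Finset.mem_product, Finset.mem_range, Finset.mem_range] at hp
    by_cases hj : p.1 + p.2 = j
    · rw [if_pos hj, if_pos hj, ← hj]
      have := step_term k m p.1 p.2 (by omega) (by omega) (lemB k m p.1)
      calc (k*m+k).factorial * (cc k m p.1 * ((p.1+p.2).choose p.1 * p.1.choose (k - p.2)))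
          = (k.factorial)^(m+1) * ((k*m+k).choose (p.1+p.2) *
              (uu k m p.1 * ((p.1+p.2).choose p.1 * (k*m+k - (p.1+p.2)).choose (k-p.2)
                * (p.1+p.2).choose k))) := this
        _ = _ := by ring
    · rw [if_neg hj, if_neg hj]; ring

lemma hockey (n j : ℕ) : ∑ h ∈ range n, h.choose j = n.choose (j+1) := by
  induction n with
  | zero => simp
  | succ n ih =>
    rw [Finset.sum_range_succ, ih]
    have h := Nat.choose_succ_succ n j
    simp only [Nat.succ_eq_add_one] at h ⊢
    omega

lemma fact_pow_dvd (k : ℕ) : ∀ m, (k.factorial)^m ∣ (k*m).factorial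
  | 0 => by simp
  | (m+1) => by
    have hkm : k*(m+1) = k*m + k := by ring
    rw [hkm, pow_succ]
    exact Dvd.dvd.trans (mul_dvd_mul (fact_pow_dvd k m) dvd_rfl)
      (Nat.factorial_mul_factorial_dvd_factorial_add (k*m) k)

end Stmt3Aux

open Stmt3Aux in
/-- `n` divides `((km+1)!/(k!)^m) ∑_{h<n} C(h,k)^m`. -/
theorem stmt3 (n m k : ℕ) (hn : 1 ≤ n) (hm : 1 ≤ m) :
    n ∣ ((k * m + 1).factorial / k.factorial ^ m) *
        ∑ h ∈ Finset.range n, (h.choose k) ^ m := by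
  have hdvd : (k.factorial)^m ∣ (k*m+1).factorial := by
    rw [Nat.factorial_succ]
    exact (fact_pow_dvd k m).mul_left _
  have hS : (∑ h ∈ Finset.range n, (h.choose k) ^ m)
      = ∑ j ∈ range (k*m+1), cc k m j * n.choose (j+1) := by
    calc (∑ h ∈ Finset.range n, (h.choose k) ^ m)
        = ∑ h ∈ range n, ∑ j ∈ range (k*m+1), cc k m j * h.choose j :=
          Finset.sum_congr rfl (fun h _ => lemA k m h)
      _ = ∑ j ∈ range (k*m+1), ∑ h ∈ range n, cc k m j * h.choose j := Finset.sum_comm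
      _ = ∑ j ∈ range (k*m+1), cc k m j * ∑ h ∈ range n, h.choose j := by
          exact Finset.sum_congr rfl (fun j _ => (Finset.mul_sum _ _ _).symm)
      _ = _ := Finset.sum_congr rfl (fun j _ => by rw [hockey])
  rw [hS, Finset.mul_sum]
  refine Finset.dvd_sum (fun j _ => ?_)
  -- key computation: N * cc j = (j+1) * (C(km+1,j+1) * uu j)
  have hNc : ((k*m+1).factorial / k.factorial ^ m) * cc k m j
      = (j+1) * ((k*m+1).choose (j+1) * uu k m j) := by
    apply Nat.eq_of_mul_eq_mul_left (pow_pos (Nat.factorial_pos k) m)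
    calc (k.factorial)^m * (((k*m+1).factorial / k.factorial ^ m) * cc k m j)
        = ((k.factorial)^m * ((k*m+1).factorial / k.factorial ^ m)) * cc k m j := by ring
      _ = (k*m+1).factorial * cc k m j := by rw [Nat.mul_div_cancel' hdvd]
      _ = (k*m+1) * ((k*m).factorial * cc k m j) := by rw [Nat.factorial_succ]; ring
      _ = (k*m+1) * ((k.factorial)^m * ((k*m).choose j * uu k m j)) := by rw [lemB]
      _ = (k.factorial)^m * (((k*m+1) * (k*m).choose j) * uu k m j) := by ring
      _ = (k.factorial)^m * (((k*m+1).choose (j+1) * (j+1)) * uu k m j) := by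
          rw [Nat.add_one_mul_choose_eq]
      _ = _ := by ring
  have hmul : n.choose (j+1) * (j+1) = n * (n-1).choose j := by
    have h := Nat.add_one_mul_choose_eq (n-1) j
    have hn1 : n - 1 + 1 = n := by omega
    rw [hn1] at h
    exact h.symm
  have hterm : ((k*m+1).factorial / k.factorial ^ m) * (cc k m j * n.choose (j+1))
      = n * ((k*m+1).choose (j+1) * uu k m j * (n-1).choose j) := by
    calc ((k*m+1).factorial / k.factorial ^ m) * (cc k m j * n.choose (j+1))
        = (((k*m+1).factorial / k.factorial ^ m) * cc k m j) * n.choose (j+1) := by ring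
      _ = ((k*m+1).choose (j+1) * uu k m j) * (n.choose (j+1) * (j+1)) := by rw [hNc]; ring
      _ = ((k*m+1).choose (j+1) * uu k m j) * (n * (n-1).choose j) := by rw [hmul]
      _ = n * ((k*m+1).choose (j+1) * uu k m j * (n-1).choose j) := by ring
  rw [hterm]
  exact dvd_mul_right n _
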